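/- Let X be a compact Hausdorff space, A a C(X)-algebra, and Y, Z closed subsets with X = Y ∪ Z. Then A is isomorphic to the pullback A(Y) ⊕_{π,π} A(Z) = {(b,c) ∈ A(Y) ⊕ A(Z) : π^Y_{Y∩Z}(b) = π^Z_{Y∩Z}(c)} of the restriction maps to Y ∩ Z. -/

import Mathlib

set_option linter.unusedSectionVars false
set_option linter.unnecessarySimpa false
set_option maxHeartbeats 1000000

variable {X : Type*} [TopologicalSpace X] [CompactSpace X] [T2Space X]
variable {A : Type*} [NonUnitalCStarAlgebra A]
variable [Module C(X, ℂ) A] [IsScalarTower C(X, ℂ) A A] [SMulCommClass C(X, ℂ) A A]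
variable [StarModule C(X, ℂ) A]

lemma aux_smul_mul_smul (f g : C(X,ℂ)) (b c : A) :
    (f • b) * (g • c) = (f * g) • (b * c) := by
  rw [smul_mul_assoc, mul_smul_comm, ← mul_smul]


lemma aux_smul_comm_prod (f : C(X,ℂ)) (z : ℂ) (b c : A) :
    f • (z • (b * c)) = z • (f • (b * c)) := by
  have h1 : z • (b * c) = (z • b) * c := (smul_mul_assoc z b c).symm
  rw [h1, ← mul_smul_comm f, smul_mul_assoc, mul_smul_comm]

lemma aux_sq_decomp (x : A) (hx : IsSelfAdjoint x) : ∃ s u : A, x = s*s - u*u := by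
  refine ⟨cfcₙ (fun t : ℝ => Real.sqrt (max t 0)) x,
    cfcₙ (fun t : ℝ => Real.sqrt (max (-t) 0)) x, ?_⟩
  rw [← cfcₙ_mul _ _ x, ← cfcₙ_mul _ _ x, ← cfcₙ_sub _ _ x]
  conv_lhs => rw [← cfcₙ_id ℝ x hx]
  apply cfcₙ_congr
  intro t _
  simp only [id]
  rw [Real.mul_self_sqrt (le_max_right _ _), Real.mul_self_sqrt (le_max_right _ _)]
  rcases le_total t 0 with h | h
  · rw [max_eq_right h, max_eq_left (by linarith)]; ring
  · rw [max_eq_left h, max_eq_right (by linarith)]; ring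

lemma aux_prod_decomp (a : A) : ∃ s u v w : A,
    a = (s*s - u*u) + Complex.I • (v*v - w*w) := by
  obtain ⟨s, u, h1⟩ := aux_sq_decomp (realPart a : A) (realPart a).2
  obtain ⟨v, w, h2⟩ := aux_sq_decomp (imaginaryPart a : A) (imaginaryPart a).2
  exact ⟨s, u, v, w, by rw [← h1, ← h2, realPart_add_I_smul_imaginaryPart a]⟩

lemma aux_smul_comm (f : C(X,ℂ)) (z : ℂ) (a : A) :
    f • (z • a) = z • (f • a) := by
  obtain ⟨s, u, v, w, rfl⟩ := aux_prod_decomp (A := A) a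
  simp only [smul_add, smul_sub, smul_smul, aux_smul_comm_prod]

lemma aux_nsmul_smul (N : ℕ) (g : C(X,ℂ)) (x : A) : (N • g) • x = N • (g • x) := by
  induction N with
  | zero => simp [zero_smul]
  | succ n ih => rw [succ_nsmul, succ_nsmul, add_smul, ih]

lemma aux_smul_star_mul_self (u : C(X,ℂ)) (x : A) :
    (star u * u) • (star x * x) = star (u • x) * (u • x) := by
  rw [star_smul, smul_mul_assoc, mul_smul_comm, ← mul_smul]

lemma aux_key_bound (g : C(X,ℂ)) (x : A) (N : ℕ) (hN : ∀ q : X, ‖g q‖^2 ≤ N) :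
    ‖g • x‖^2 ≤ N * ‖x‖^2 := by
  letI : PartialOrder (Unitization ℂ A) := CStarAlgebra.spectralOrder _
  haveI : StarOrderedRing (Unitization ℂ A) := CStarAlgebra.spectralOrderedRing _
  set p : A := star x * x with hp
  have hcont : Continuous fun q : X => ((Real.sqrt ((N:ℝ) - ‖g q‖^2) : ℝ) : ℂ) := by
    fun_prop
  set h : C(X,ℂ) := ⟨_, hcont⟩ with hdef
  have hh : star h * h = N • (1 : C(X,ℂ)) - star g * g := by
    ext q
    have hz : (g q) * (starRingEnd ℂ) (g q) = ((‖g q‖^2 : ℝ) : ℂ) := by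
      rw [Complex.mul_conj]; norm_cast
      rw [Complex.normSq_eq_norm_sq]
    simp only [ContinuousMap.mul_apply, ContinuousMap.star_apply, ContinuousMap.sub_apply,
      ContinuousMap.smul_apply, ContinuousMap.one_apply, ContinuousMap.coe_mk, hdef,
      Complex.star_def, Complex.conj_ofReal, nsmul_eq_mul, mul_one]
    rw [mul_comm ((starRingEnd ℂ) (g q)), hz, ← Complex.ofReal_mul,
      Real.mul_self_sqrt (by linarith [hN q])]
    push_cast [ContinuousMap.natCast_apply]
    ring
  have h1 : (0 : Unitization ℂ A) ≤ (((star g * g) • p : A) : Unitization ℂ A) := by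
    rw [aux_smul_star_mul_self, Unitization.inr_mul, Unitization.inr_star]
    exact star_mul_self_nonneg _
  have h2 : (((star g * g) • p : A) : Unitization ℂ A) ≤ ((N • p : A) : Unitization ℂ A) := by
    rw [← sub_nonneg, ← Unitization.inr_sub ℂ]
    have e1 : (N • p : A) - (star g * g) • p = star (h • x) * (h • x) := by
      rw [← aux_smul_star_mul_self, hh, sub_smul, aux_nsmul_smul, one_smul]
    rw [e1, Unitization.inr_mul, Unitization.inr_star]
    exact star_mul_self_nonneg _
  have h3 : ‖((star g * g) • p : A)‖ ≤ ‖(N • p : A)‖ := by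
    have := CStarAlgebra.norm_le_norm_of_nonneg_of_le h1 h2
    simpa only [Unitization.norm_inr] using this
  calc ‖g • x‖^2 = ‖star (g • x) * (g • x)‖ := by
        rw [CStarRing.norm_star_mul_self]; ring
    _ = ‖(star g * g) • p‖ := by rw [aux_smul_star_mul_self]
    _ ≤ ‖(N • p : A)‖ := h3
    _ = N * ‖x‖^2 := by
        rw [← Nat.cast_smul_eq_nsmul ℝ, norm_smul, hp, CStarRing.norm_star_mul_self,
          Real.norm_natCast]
        ring

lemma aux_norm_smul_le (f : C(X,ℂ)) (a : A) : ‖f • a‖ ≤ ‖f‖ * ‖a‖ := by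
  have hsq : ∀ ε > (0:ℝ), ‖f • a‖^2 ≤ ‖f‖^2 * ‖a‖^2 + ε := by
    intro ε hε
    obtain ⟨k, hk⟩ := exists_nat_gt (Real.sqrt (‖a‖^2 / ε))
    have hkpos : (0:ℝ) < (k:ℝ) := lt_of_le_of_lt (Real.sqrt_nonneg _) hk
    have hkpos2 : (0:ℝ) < (k:ℝ)^2 := by positivity
    set N : ℕ := ⌈(k:ℝ)^2 * ‖f‖^2⌉₊ with hNdef
    have hbound : ∀ q : X, ‖(k • f) q‖^2 ≤ N := by
      intro q
      have h1 : ‖(k • f) q‖ = (k:ℝ) * ‖f q‖ := by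
        simp only [ContinuousMap.smul_apply]
        rw [← Nat.cast_smul_eq_nsmul ℝ, norm_smul, Real.norm_natCast]
      rw [h1]
      have h2 : (k:ℝ) * ‖f q‖ ≤ (k:ℝ) * ‖f‖ :=
        mul_le_mul_of_nonneg_left (ContinuousMap.norm_coe_le_norm f q) (le_of_lt hkpos)
      have h3 : ((k:ℝ) * ‖f q‖)^2 ≤ ((k:ℝ) * ‖f‖)^2 :=
        pow_le_pow_left₀ (by positivity) h2 2
      calc ((k:ℝ) * ‖f q‖)^2 ≤ ((k:ℝ) * ‖f‖)^2 := h3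
        _ = (k:ℝ)^2 * ‖f‖^2 := by ring
        _ ≤ N := Nat.le_ceil _
    have hmain := aux_key_bound (k • f) a N hbound
    rw [aux_nsmul_smul, ← Nat.cast_smul_eq_nsmul ℝ, norm_smul, Real.norm_natCast] at hmain
    have hN : (N:ℝ) ≤ (k:ℝ)^2 * ‖f‖^2 + 1 :=
      le_of_lt (Nat.ceil_lt_add_one (by positivity))
    have key : (k:ℝ)^2 * ‖f • a‖^2 ≤ ((k:ℝ)^2 * ‖f‖^2 + 1) * ‖a‖^2 := by
      calc (k:ℝ)^2 * ‖f • a‖^2 = ((k:ℝ) * ‖f • a‖)^2 := by ring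
        _ ≤ N * ‖a‖^2 := hmain
        _ ≤ ((k:ℝ)^2 * ‖f‖^2 + 1) * ‖a‖^2 := by nlinarith [sq_nonneg ‖a‖]
    have hdiv : ‖f • a‖^2 ≤ ‖f‖^2 * ‖a‖^2 + ‖a‖^2 / (k:ℝ)^2 := by
      have heq : (k:ℝ)^2 * (‖f‖^2 * ‖a‖^2 + ‖a‖^2 / (k:ℝ)^2) = ((k:ℝ)^2*‖f‖^2+1) * ‖a‖^2 := by
        field_simp
      rw [← mul_le_mul_iff_right₀ hkpos2, heq]
      exact key
    have h5 : ‖a‖^2 / ε < (k:ℝ)^2 := Real.lt_sq_of_sqrt_lt hk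
    have h6 : ‖a‖^2 / (k:ℝ)^2 ≤ ε := by
      rw [div_lt_iff₀ hε] at h5
      rw [div_le_iff₀ hkpos2]
      nlinarith
    linarith
  have h2 : ‖f • a‖^2 ≤ ‖f‖^2 * ‖a‖^2 := by
    by_contra hcon
    push_neg at hcon
    have := hsq ((‖f • a‖^2 - ‖f‖^2 * ‖a‖^2)/2) (by linarith)
    linarith
  nlinarith [norm_nonneg (f • a), mul_nonneg (norm_nonneg f) (norm_nonneg a),
    sq_nonneg (‖f • a‖ - ‖f‖*‖a‖), sq_nonneg (‖f • a‖ + ‖f‖*‖a‖)]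

/-- For a closed set `S ⊆ X`, the closed two-sided ideal `C(X, S)·A` of the
`C(X)`-algebra `A`: the closure of the linear span of `{f • a : f vanishes on S}`.
The restriction `A(S)` is the quotient of `A` by this ideal, with quotient map `π_S`. -/
def fiberIdeal (S : Set X) (A : Type*) [NonUnitalCStarAlgebra A] [Module C(X, ℂ) A] :
    Set A :=
  closure (Submodule.span ℂ
    {y : A | ∃ (f : C(X, ℂ)) (c : A), (∀ x ∈ S, f x = 0) ∧ y = f • c} : Set A)

abbrev auxSpan (S : Set X) (A : Type*) [NonUnitalCStarAlgebra A] [Module C(X, ℂ) A] :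
    Submodule ℂ A :=
  Submodule.span ℂ {y : A | ∃ (f : C(X, ℂ)) (c : A), (∀ x ∈ S, f x = 0) ∧ y = f • c}

lemma fiberIdeal_eq (S : Set X) : fiberIdeal S A = closure (auxSpan S A : Set A) := rfl

lemma fiberIdeal_eq' (S : Set X) :
    fiberIdeal S A = (((auxSpan S A).topologicalClosure : Submodule ℂ A) : Set A) :=
  (Submodule.topologicalClosure_coe _).symm

lemma aux_gen_mem {S : Set X} {f : C(X,ℂ)} (hf : ∀ x ∈ S, f x = 0) (c : A) :
    f • c ∈ auxSpan S A :=
  Submodule.subset_span ⟨f, c, hf, rfl⟩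

lemma aux_gen_mem_ideal {S : Set X} {f : C(X,ℂ)} (hf : ∀ x ∈ S, f x = 0) (c : A) :
    f • c ∈ fiberIdeal S A :=
  subset_closure (aux_gen_mem hf c)

/-- Post-composition with `Complex.ofReal`. -/
def auxC (u : C(X,ℝ)) : C(X,ℂ) :=
  ⟨fun q => (u q : ℂ), by fun_prop⟩

@[simp] lemma auxC_apply (u : C(X,ℝ)) (q : X) : auxC u q = (u q : ℂ) := rfl

lemma auxC_sub_one (w : C(X,ℝ)) : (1 : C(X,ℂ)) - auxC w = auxC (1 - w) := by
  ext q; simp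

lemma auxC_mul (u v : C(X,ℝ)) : auxC (u * v) = auxC u * auxC v := by
  ext q; simp

lemma auxC_norm_le_one {t : C(X,ℝ)} (ht : ∀ q, |t q| ≤ 1) : ‖auxC t‖ ≤ 1 := by
  rw [ContinuousMap.norm_le _ zero_le_one]
  intro q
  simpa [Complex.norm_real] using ht q

/-- Approximation lemma: elements of the span admit approximate units vanishing on `S`. -/
lemma aux_approx {S : Set X} {s : A} (hs : s ∈ auxSpan S A) :
    ∀ ε > (0:ℝ), ∃ u : C(X,ℝ), (∀ q, 0 ≤ u q ∧ u q ≤ 1) ∧ (∀ x ∈ S, u x = 0) ∧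
      ‖s - auxC u • s‖ < ε := by
  induction hs using Submodule.span_induction with
  | mem x h =>
    obtain ⟨f, c, hf, rfl⟩ := h
    intro ε hε
    obtain ⟨n, hn⟩ := exists_nat_gt (‖c‖ / ε)
    set m : ℕ := n + 1 with hm
    have hmR : (0:ℝ) < m := by positivity
    have hcm : ‖c‖ / ε < (m:ℝ) := lt_of_lt_of_le hn (by exact_mod_cast Nat.le_succ n)
    refine ⟨⟨fun q => min 1 ((m:ℝ) * ‖f q‖), by fun_prop⟩, ?_, ?_, ?_⟩
    · intro q
      exact ⟨le_min zero_le_one (by positivity), min_le_left _ _⟩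
    · intro x hx
      simp [hf x hx]
    · have key : f • c - auxC ⟨fun q => min 1 ((m:ℝ) * ‖f q‖), by fun_prop⟩ • (f • c)
          = (f - auxC ⟨fun q => min 1 ((m:ℝ) * ‖f q‖), by fun_prop⟩ * f) • c := by
        rw [sub_smul, mul_smul]
      rw [key]
      have hb : ‖f - auxC ⟨fun q => min 1 ((m:ℝ) * ‖f q‖), by fun_prop⟩ * f‖ ≤ 1/m := by
        rw [ContinuousMap.norm_le _ (by positivity)]
        intro q
        simp only [ContinuousMap.sub_apply, ContinuousMap.mul_apply, auxC_apply,
          ContinuousMap.coe_mk]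
        rcases le_or_gt 1 ((m:ℝ) * ‖f q‖) with h | h
        · rw [min_eq_left h]
          simp
          try positivity
        · rw [min_eq_right (le_of_lt h)]
          have h1 : ‖f q‖ ≤ 1/m := by
            rw [le_div_iff₀ hmR]
            nlinarith
          have h2 : f q - ((((m:ℝ) * ‖f q‖ : ℝ)):ℂ) * f q
              = ((1 - (m:ℝ) * ‖f q‖ : ℝ) : ℂ) * f q := by push_cast; ring
          rw [h2, norm_mul]
          have h3 : ‖((1 - (m:ℝ) * ‖f q‖ : ℝ) : ℂ)‖ ≤ 1 := by
            rw [Complex.norm_real]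
            rw [Real.norm_eq_abs, abs_le]
            constructor <;> nlinarith [norm_nonneg (f q)]
          calc ‖((1 - (m:ℝ) * ‖f q‖ : ℝ) : ℂ)‖ * ‖f q‖ ≤ 1 * (1/m) := by
                exact mul_le_mul h3 h1 (norm_nonneg _) zero_le_one
            _ = 1/m := one_mul _
      calc ‖(f - auxC ⟨fun q => min 1 ((m:ℝ) * ‖f q‖), by fun_prop⟩ * f) • c‖
          ≤ ‖f - auxC ⟨fun q => min 1 ((m:ℝ) * ‖f q‖), by fun_prop⟩ * f‖ * ‖c‖ :=
            aux_norm_smul_le _ _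
        _ ≤ (1/m) * ‖c‖ := by
            apply mul_le_mul_of_nonneg_right hb (norm_nonneg c)
        _ < ε := by
            rw [div_mul_eq_mul_div, one_mul, div_lt_iff₀ hmR]
            rw [div_lt_iff₀ hε] at hcm
            linarith
  | zero =>
    intro ε hε
    exact ⟨0, fun q => ⟨le_refl 0, zero_le_one⟩, fun x _ => rfl, by simpa using hε⟩
  | add x y hx hy ihx ihy =>
    intro ε hε
    obtain ⟨u, hu1, hu2, hu3⟩ := ihx (ε/2) (by positivity)
    obtain ⟨v, hv1, hv2, hv3⟩ := ihy (ε/2) (by positivity)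
    refine ⟨u + v - u * v, ?_, ?_, ?_⟩
    · intro q
      have h1 := hu1 q; have h2 := hv1 q
      constructor
      · simp only [ContinuousMap.sub_apply, ContinuousMap.add_apply, ContinuousMap.mul_apply]
        nlinarith
      · simp only [ContinuousMap.sub_apply, ContinuousMap.add_apply, ContinuousMap.mul_apply]
        nlinarith
    · intro x hx
      simp [hu2 x hx, hv2 x hx]
    · have hw : (1 : C(X,ℝ)) - (u + v - u * v) = (1 - v) * (1 - u) := by ring
      have hxterm : x + y - auxC (u + v - u * v) • (x + y)
          = (x - auxC (u + v - u * v) • x) + (y - auxC (u + v - u * v) • y) := by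
        rw [smul_add]; abel
      rw [hxterm]
      have habs : ∀ (t : C(X,ℝ)), (∀ q, 0 ≤ t q ∧ t q ≤ 1) → ∀ q, |(1 - t) q| ≤ 1 := by
        intro t ht q
        have := ht q
        simp only [ContinuousMap.sub_apply, ContinuousMap.one_apply]
        rw [abs_le]; constructor <;> linarith [this.1, this.2]
      have hx' : ‖x - auxC (u + v - u * v) • x‖ ≤ ‖x - auxC u • x‖ := by
        have e1 : x - auxC (u + v - u * v) • x = ((1:C(X,ℂ)) - auxC (u + v - u*v)) • x := by
          rw [sub_smul, one_smul]
        have e2 : ((1:C(X,ℂ)) - auxC (u + v - u*v)) = auxC (1 - v) * auxC (1 - u) := by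
          rw [auxC_sub_one, hw, auxC_mul]
        rw [e1, e2, mul_smul]
        have e3 : auxC (1 - u) • x = x - auxC u • x := by
          rw [← auxC_sub_one, sub_smul, one_smul]
        rw [e3]
        calc ‖auxC (1 - v) • (x - auxC u • x)‖ ≤ ‖auxC (1-v)‖ * ‖x - auxC u • x‖ :=
              aux_norm_smul_le _ _
          _ ≤ 1 * ‖x - auxC u • x‖ :=
              mul_le_mul_of_nonneg_right (auxC_norm_le_one (habs v hv1)) (norm_nonneg _)
          _ = ‖x - auxC u • x‖ := one_mul _
      have hy' : ‖y - auxC (u + v - u * v) • y‖ ≤ ‖y - auxC v • y‖ := by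
        have hw' : (1 : C(X,ℝ)) - (u + v - u * v) = (1 - u) * (1 - v) := by ring
        have e1 : y - auxC (u + v - u * v) • y = ((1:C(X,ℂ)) - auxC (u + v - u*v)) • y := by
          rw [sub_smul, one_smul]
        have e2 : ((1:C(X,ℂ)) - auxC (u + v - u*v)) = auxC (1 - u) * auxC (1 - v) := by
          rw [auxC_sub_one, hw', auxC_mul]
        rw [e1, e2, mul_smul]
        have e3 : auxC (1 - v) • y = y - auxC v • y := by
          rw [← auxC_sub_one, sub_smul, one_smul]
        rw [e3]
        calc ‖auxC (1 - u) • (y - auxC v • y)‖ ≤ ‖auxC (1-u)‖ * ‖y - auxC v • y‖ :=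
              aux_norm_smul_le _ _
          _ ≤ 1 * ‖y - auxC v • y‖ :=
              mul_le_mul_of_nonneg_right (auxC_norm_le_one (habs u hu1)) (norm_nonneg _)
          _ = ‖y - auxC v • y‖ := one_mul _
      calc ‖(x - auxC (u+v-u*v) • x) + (y - auxC (u+v-u*v) • y)‖
          ≤ ‖x - auxC (u+v-u*v) • x‖ + ‖y - auxC (u+v-u*v) • y‖ := norm_add_le _ _
        _ < ε/2 + ε/2 := by
            have := hx'.trans_lt hu3
            have := hy'.trans_lt hv3
            linarith
        _ = ε := by ring
  | smul z x hx ih =>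
    intro ε hε
    obtain ⟨u, hu1, hu2, hu3⟩ := ih (ε/(‖z‖+1)) (by positivity)
    refine ⟨u, hu1, hu2, ?_⟩
    have e1 : z • x - auxC u • (z • x) = z • (x - auxC u • x) := by
      rw [aux_smul_comm, smul_sub]
    rw [e1, norm_smul]
    calc ‖z‖ * ‖x - auxC u • x‖ ≤ ‖z‖ * (ε/(‖z‖+1)) := by
          apply mul_le_mul_of_nonneg_left (le_of_lt hu3) (norm_nonneg z)
      _ < ε := by
          rw [mul_div_assoc']
          rw [div_lt_iff₀ (by positivity : (0:ℝ) < ‖z‖+1)]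
          nlinarith [norm_nonneg z]

lemma aux_fun_decomp {Y Z : Set X} (hY : IsClosed Y) (hZ : IsClosed Z)
    (hYZ : Y ∪ Z = Set.univ) (φ : C(X,ℂ)) (hφ : ∀ x ∈ Y ∩ Z, φ x = 0) :
    ∃ g h : C(X,ℂ), φ = g + h ∧ (∀ x ∈ Y, g x = 0) ∧ (∀ x ∈ Z, h x = 0) ∧
      (∀ x, ‖g x‖ ≤ ‖φ x‖) ∧ (∀ x, ‖h x‖ ≤ ‖φ x‖) := by
  classical
  have hfr : ∀ x ∈ frontier Y, (fun _ : X => (0:ℂ)) x = φ x := by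
    intro x hx
    have h1 : x ∈ Y := hY.closure_eq ▸ hx.1
    have h2 : x ∈ Z := by
      have hx' : x ∈ closure Y ∩ closure Yᶜ := by
        rwa [← frontier_eq_closure_inter_closure]
      have hsub : Yᶜ ⊆ Z := by
        intro q hq
        have hq2 : q ∈ Y ∪ Z := by rw [hYZ]; trivial
        exact hq2.resolve_left hq
      exact (closure_minimal hsub hZ) hx'.2
    exact (hφ x ⟨h1, h2⟩).symm
  set g : C(X,ℂ) := ⟨Y.piecewise (fun _ => 0) φ,
    Continuous.piecewise hfr continuous_const φ.continuous⟩ with hg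
  refine ⟨g, φ - g, by ring, ?_, ?_, ?_, ?_⟩
  · intro x hx
    simp [hg, Set.piecewise_eq_of_mem _ _ _ hx]
  · intro x hx
    by_cases hxY : x ∈ Y
    · have := hφ x ⟨hxY, hx⟩
      simp [hg, Set.piecewise_eq_of_mem _ _ _ hxY, this]
    · simp [hg, Set.piecewise_eq_of_notMem _ _ _ hxY]
  · intro x
    by_cases hxY : x ∈ Y
    · simp [hg, Set.piecewise_eq_of_mem _ _ _ hxY]
    · simp [hg, Set.piecewise_eq_of_notMem _ _ _ hxY]
  · intro x
    by_cases hxY : x ∈ Y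
    · simp [hg, Set.piecewise_eq_of_mem _ _ _ hxY]
    · simp [hg, Set.piecewise_eq_of_notMem _ _ _ hxY]

lemma aux_step {Y Z : Set X} (hY : IsClosed Y) (hZ : IsClosed Z) (hYZ : Y ∪ Z = Set.univ)
    {e : A} (he : e ∈ fiberIdeal (Y ∩ Z) A) {δ : ℝ} (hδ : 0 < δ) :
    ∃ y z e' : A, y ∈ fiberIdeal Y A ∧ z ∈ fiberIdeal Z A ∧ ‖y‖ ≤ ‖e‖ + δ ∧ ‖z‖ ≤ ‖e‖ + δ ∧
      e' ∈ fiberIdeal (Y ∩ Z) A ∧ ‖e'‖ ≤ δ ∧ e = y + z + e' := by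
  have heM : e ∈ (auxSpan (Y ∩ Z) A).topologicalClosure := by
    rw [← SetLike.mem_coe, ← fiberIdeal_eq']
    exact he
  have he2 := he
  rw [fiberIdeal_eq, Metric.mem_closure_iff] at he2
  obtain ⟨s, hsSpan, hdist⟩ := he2 (δ/2) (by positivity)
  rw [dist_eq_norm] at hdist
  obtain ⟨u, hu1, hu2, hu3⟩ := aux_approx hsSpan (δ/2) (by positivity)
  have hφ : ∀ x ∈ Y ∩ Z, (auxC u) x = 0 := by
    intro x hx
    simp [hu2 x hx]
  obtain ⟨g, h, hgh, hgY, hhZ, hgb, hhb⟩ := aux_fun_decomp hY hZ hYZ (auxC u) hφ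
  have hsn : ‖s‖ ≤ ‖e‖ + δ/2 := by
    have h1 : ‖s‖ - ‖e‖ ≤ ‖s - e‖ := norm_sub_norm_le s e
    have h2 : ‖s - e‖ = ‖e - s‖ := norm_sub_rev s e
    linarith
  have hnorm1 : ∀ (t : C(X,ℂ)), (∀ q, ‖t q‖ ≤ ‖(auxC u) q‖) → ‖t‖ ≤ 1 := by
    intro t ht
    rw [ContinuousMap.norm_le _ zero_le_one]
    intro q
    refine (ht q).trans ?_
    simp only [auxC_apply, Complex.norm_real]
    rw [Real.norm_eq_abs, abs_le]
    exact ⟨by linarith [(hu1 q).1], (hu1 q).2⟩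
  have hsum : g • s + h • s = auxC u • s := by rw [← add_smul, ← hgh]
  refine ⟨g • s, h • s, e - g • s - h • s, aux_gen_mem_ideal hgY s, aux_gen_mem_ideal hhZ s,
    ?_, ?_, ?_, ?_, by abel⟩
  · calc ‖g • s‖ ≤ ‖g‖ * ‖s‖ := aux_norm_smul_le _ _
      _ ≤ 1 * (‖e‖ + δ/2) :=
          mul_le_mul (hnorm1 g hgb) hsn (norm_nonneg s) zero_le_one
      _ ≤ ‖e‖ + δ := by linarith
  · calc ‖h • s‖ ≤ ‖h‖ * ‖s‖ := aux_norm_smul_le _ _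
      _ ≤ 1 * (‖e‖ + δ/2) :=
          mul_le_mul (hnorm1 h hhb) hsn (norm_nonneg s) zero_le_one
      _ ≤ ‖e‖ + δ := by linarith
  · have he' : e - g • s - h • s = e - auxC u • s := by rw [← hsum]; abel
    rw [fiberIdeal_eq', SetLike.mem_coe, he']
    exact Submodule.sub_mem _ heM
      (Submodule.le_topologicalClosure _ (aux_gen_mem hφ s))
  · have he' : e - g • s - h • s = (e - s) + (s - auxC u • s) := by rw [← hsum]; abel
    rw [he']
    calc ‖(e - s) + (s - auxC u • s)‖ ≤ ‖e - s‖ + ‖s - auxC u • s‖ := norm_add_le _ _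
      _ ≤ δ/2 + δ/2 := by linarith
      _ = δ := by ring

lemma aux_part2 {Y Z : Set X} (hY : IsClosed Y) (hZ : IsClosed Z) (hYZ : Y ∪ Z = Set.univ)
    (e : A) (he : e ∈ fiberIdeal (Y ∩ Z) A) :
    ∃ dY ∈ fiberIdeal Y A, ∃ dZ ∈ fiberIdeal Z A, e = dY + dZ := by
  classical
  have step : ∀ (x : {a : A // a ∈ fiberIdeal (Y ∩ Z) A}) (n : ℕ),
      ∃ t : A × A × {a : A // a ∈ fiberIdeal (Y ∩ Z) A},
        t.1 ∈ fiberIdeal Y A ∧ t.2.1 ∈ fiberIdeal Z A ∧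
        ‖t.1‖ ≤ ‖(x:A)‖ + (1/2:ℝ)^(n+1) ∧ ‖t.2.1‖ ≤ ‖(x:A)‖ + (1/2:ℝ)^(n+1) ∧
        ‖(t.2.2 : A)‖ ≤ (1/2:ℝ)^(n+1) ∧ (x : A) = t.1 + t.2.1 + (t.2.2 : A) := by
    intro x n
    obtain ⟨yy, zz, e', h1, h2, h3, h4, h5, h6, h7⟩ :=
      aux_step hY hZ hYZ x.2 (show (0:ℝ) < (1/2:ℝ)^(n+1) by positivity)
    exact ⟨⟨yy, zz, ⟨e', h5⟩⟩, h1, h2, h3, h4, h6, h7⟩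
  choose F hF1 hF2 hF3 hF4 hF5 hF6 using step
  let Esub : ℕ → {a : A // a ∈ fiberIdeal (Y ∩ Z) A} :=
    fun n => Nat.rec ⟨e, he⟩ (fun n x => (F x n).2.2) n
  set y : ℕ → A := fun n => (F (Esub n) n).1 with hy
  set z : ℕ → A := fun n => (F (Esub n) n).2.1 with hz
  set E : ℕ → A := fun n => (Esub n).val with hEdef
  have hE0 : E 0 = e := rfl
  have hEsucc : ∀ n, E (n+1) = ((F (Esub n) n).2.2).val := fun n => rfl
  have hsplit : ∀ n, E n = y n + z n + E (n+1) := fun n => hF6 (Esub n) n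
  have hEnorm : ∀ n, ‖E (n+1)‖ ≤ (1/2:ℝ)^(n+1) := fun n => hF5 (Esub n) n
  have hynorm : ∀ n, ‖y n‖ ≤ ‖E n‖ + (1/2:ℝ)^(n+1) := fun n => hF3 (Esub n) n
  have hznorm : ∀ n, ‖z n‖ ≤ ‖E n‖ + (1/2:ℝ)^(n+1) := fun n => hF4 (Esub n) n
  have hEbound : ∀ n, ‖E n‖ ≤ (‖e‖ + 2) * (1/2:ℝ)^n := by
    intro n
    cases n with
    | zero =>
      rw [hE0]
      norm_num
    | succ n =>
      calc ‖E (n+1)‖ ≤ (1/2:ℝ)^(n+1) := hEnorm n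
        _ ≤ (‖e‖+2)*(1/2:ℝ)^(n+1) := by
            nlinarith [pow_pos (show (0:ℝ) < 1/2 by norm_num) (n+1), norm_nonneg e]
  have hhalf : ∀ n : ℕ, (1/2:ℝ)^(n+1) ≤ (1/2:ℝ)^n := by
    intro n
    rw [pow_succ]
    nlinarith [pow_pos (show (0:ℝ) < 1/2 by norm_num) n]
  have hybound : ∀ n, ‖y n‖ ≤ (‖e‖ + 3) * (1/2:ℝ)^n := by
    intro n
    have h1 := hynorm n; have h2 := hEbound n; have h3 := hhalf n
    nlinarith [pow_pos (show (0:ℝ) < 1/2 by norm_num) n]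
  have hzbound : ∀ n, ‖z n‖ ≤ (‖e‖ + 3) * (1/2:ℝ)^n := by
    intro n
    have h1 := hznorm n; have h2 := hEbound n; have h3 := hhalf n
    nlinarith [pow_pos (show (0:ℝ) < 1/2 by norm_num) n]
  have hsummable : Summable (fun n => (‖e‖+3) * (1/2:ℝ)^n) :=
    (summable_geometric_of_lt_one (by norm_num) (by norm_num)).mul_left _
  have hySummable : Summable y := Summable.of_norm_bounded hsummable hybound
  have hzSummable : Summable z := Summable.of_norm_bounded hsummable hzbound
  have hyHas := hySummable.hasSum
  have hzHas := hzSummable.hasSum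
  set dY := ∑' n, y n with hdYdef
  set dZ := ∑' n, z n with hdZdef
  have hpartial : ∀ n, (∑ i ∈ Finset.range n, y i) + (∑ i ∈ Finset.range n, z i) = e - E n := by
    intro n
    induction n with
    | zero => simp [hE0]
    | succ n ih =>
      have hEn : E (n+1) = E n - y n - z n := by
        rw [hsplit n]; abel
      rw [Finset.sum_range_succ, Finset.sum_range_succ, hEn]
      have lhs : ((∑ i ∈ Finset.range n, y i) + y n) + ((∑ i ∈ Finset.range n, z i) + z n)
          = ((∑ i ∈ Finset.range n, y i) + (∑ i ∈ Finset.range n, z i)) + (y n + z n) := by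
        abel
      rw [lhs, ih]
      abel
  have hEtend : Filter.Tendsto E Filter.atTop (nhds 0) := by
    apply squeeze_zero_norm hEbound
    simpa using (tendsto_pow_atTop_nhds_zero_of_lt_one (by norm_num : (0:ℝ) ≤ 1/2)
      (by norm_num : (1/2:ℝ) < 1)).const_mul (‖e‖+2)
  have h1 : Filter.Tendsto (fun n => e - E n) Filter.atTop (nhds e) := by
    simpa using tendsto_const_nhds.sub hEtend
  have h2 : Filter.Tendsto
      (fun n => (∑ i ∈ Finset.range n, y i) + (∑ i ∈ Finset.range n, z i))
      Filter.atTop (nhds (dY + dZ)) :=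
    (hyHas.tendsto_sum_nat).add (hzHas.tendsto_sum_nat)
  have h2' : Filter.Tendsto (fun n => e - E n) Filter.atTop (nhds (dY + dZ)) := by
    simpa only [hpartial] using h2
  have he_eq : e = dY + dZ := tendsto_nhds_unique h1 h2'
  have hdY : dY ∈ fiberIdeal Y A := by
    rw [fiberIdeal_eq']
    have hclosed : IsClosed ((auxSpan Y A).topologicalClosure : Set A) :=
      Submodule.isClosed_topologicalClosure _
    refine hclosed.mem_of_tendsto hyHas.tendsto_sum_nat
      (Filter.Eventually.of_forall fun n => ?_)
    rw [SetLike.mem_coe]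
    refine Submodule.sum_mem _ fun i _ => ?_
    have := hF1 (Esub i) i
    rwa [fiberIdeal_eq', SetLike.mem_coe] at this
  have hdZ : dZ ∈ fiberIdeal Z A := by
    rw [fiberIdeal_eq']
    have hclosed : IsClosed ((auxSpan Z A).topologicalClosure : Set A) :=
      Submodule.isClosed_topologicalClosure _
    refine hclosed.mem_of_tendsto hzHas.tendsto_sum_nat
      (Filter.Eventually.of_forall fun n => ?_)
    rw [SetLike.mem_coe]
    refine Submodule.sum_mem _ fun i _ => ?_
    have := hF2 (Esub i) i
    rwa [fiberIdeal_eq', SetLike.mem_coe] at this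
  exact ⟨dY, hdY, dZ, hdZ, he_eq⟩

lemma aux_star_mem {S : Set X} {a : A} (ha : a ∈ fiberIdeal S A) :
    star a ∈ fiberIdeal S A := by
  rw [fiberIdeal_eq] at ha ⊢
  refine map_mem_closure continuous_star ha ?_
  intro x hx
  induction hx using Submodule.span_induction with
  | mem x h =>
    obtain ⟨f, c, hf, rfl⟩ := h
    rw [star_smul]
    exact aux_gen_mem (fun q hq => by rw [ContinuousMap.star_apply, hf q hq, star_zero]) _
  | zero => simpa using Submodule.zero_mem _
  | add x y hx hy ihx ihy => rw [star_add]; exact Submodule.add_mem _ ihx ihy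
  | smul z x hx ih => rw [star_smul]; exact Submodule.smul_mem _ _ ih

lemma aux_mul_eq_zero {Y Z : Set X} (hYZ : Y ∪ Z = Set.univ) {a b : A}
    (ha : a ∈ fiberIdeal Y A) (hb : b ∈ fiberIdeal Z A) : a * b = 0 := by
  rw [fiberIdeal_eq] at ha hb
  -- first: for generators on the right
  have key1 : ∀ (g : C(X,ℂ)), (∀ x ∈ Z, g x = 0) → ∀ (c : A), a * (g • c) = 0 := by
    intro g hg c
    have hker : (auxSpan Y A : Set A) ⊆ (LinearMap.ker (LinearMap.mulRight ℂ (g • c)) : Set A) := by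
      refine Submodule.span_le.mpr ?_
      rintro _ ⟨f, d, hf, rfl⟩
      have hfg : f * g = 0 := by
        ext q
        have hq : q ∈ Y ∪ Z := by rw [hYZ]; trivial
        rcases hq with hq | hq
        · simp [hf q hq]
        · simp [hg q hq]
      simp only [SetLike.mem_coe, LinearMap.mem_ker, LinearMap.mulRight_apply]
      rw [aux_smul_mul_smul, hfg, zero_smul]
    have hclosed : IsClosed (LinearMap.ker (LinearMap.mulRight ℂ (g • c)) : Set A) := by
      have : (LinearMap.ker (LinearMap.mulRight ℂ (g • c)) : Set A)
          = (fun x => x * (g • c)) ⁻¹' {0} := by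
        ext x; simp [LinearMap.mem_ker]
      rw [this]
      exact IsClosed.preimage (continuous_id.mul continuous_const) isClosed_singleton
    have := closure_minimal hker hclosed ha
    simpa using this
  -- then: for all b in the closure
  have hker2 : (auxSpan Z A : Set A) ⊆ (LinearMap.ker (LinearMap.mulLeft ℂ a) : Set A) := by
    refine Submodule.span_le.mpr ?_
    rintro _ ⟨g, c, hg, rfl⟩
    simp only [SetLike.mem_coe, LinearMap.mem_ker, LinearMap.mulLeft_apply]
    exact key1 g hg c
  have hclosed2 : IsClosed (LinearMap.ker (LinearMap.mulLeft ℂ a) : Set A) := by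
    have : (LinearMap.ker (LinearMap.mulLeft ℂ a) : Set A) = (fun x => a * x) ⁻¹' {0} := by
      ext x; simp [LinearMap.mem_ker]
    rw [this]
    exact IsClosed.preimage (continuous_const.mul continuous_id) isClosed_singleton
  have := closure_minimal hker2 hclosed2 hb
  simpa using this

lemma aux_part1 {Y Z : Set X} (hYZ : Y ∪ Z = Set.univ) (a : A)
    (hA : a ∈ fiberIdeal Y A) (hB : a ∈ fiberIdeal Z A) : a = 0 := by
  have := aux_mul_eq_zero hYZ (aux_star_mem hA) hB
  rwa [CStarRing.star_mul_self_eq_zero_iff] at this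




/-- Let `X` be compact Hausdorff, `A` a `C(X)`-algebra and `Y, Z` closed subsets with
`X = Y ∪ Z`. Then the canonical map `a ↦ (π_Y a, π_Z a)` is an isomorphism of `A` onto
the pullback `A(Y) ⊕_{π,π} A(Z) = {(b, c) : π^Y_{Y∩Z} b = π^Z_{Y∩Z} c}`: it is injective
(the ideals `C(X,Y)·A` and `C(X,Z)·A` intersect trivially), and surjective onto the
pullback (whenever `b, c ∈ A` agree modulo `C(X, Y∩Z)·A` there is `a ∈ A` with
`π_Y a = π_Y b` and `π_Z a = π_Z c`). -/
theorem stmt14 (Y Z : Set X) (hY : IsClosed Y) (hZ : IsClosed Z)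
    (hYZ : Y ∪ Z = Set.univ) :
    (∀ a : A, a ∈ fiberIdeal Y A → a ∈ fiberIdeal Z A → a = 0) ∧
      (∀ b c : A, b - c ∈ fiberIdeal (Y ∩ Z) A →
        ∃ a : A, a - b ∈ fiberIdeal Y A ∧ a - c ∈ fiberIdeal Z A) := by
  constructor
  · exact fun a ha hb => aux_part1 hYZ a ha hb
  · intro b c hbc
    obtain ⟨dY, hdY, dZ, hdZ, heq⟩ := aux_part2 hY hZ hYZ (b - c) hbc
    refine ⟨b - dY, ?_, ?_⟩
    · have h1 : b - dY - b = -dY := by abel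
      rw [h1, fiberIdeal_eq', SetLike.mem_coe]
      exact Submodule.neg_mem _ (by rwa [fiberIdeal_eq', SetLike.mem_coe] at hdY)
    · have h3 : b - dY - c = dZ := by
        calc b - dY - c = (b - c) - dY := by abel
          _ = (dY + dZ) - dY := by rw [← heq]
          _ = dZ := by abel
      rwa [h3]
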